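/- Let (S, 𝓕, τ) be a probabilistic metric space whose triangle function τ is continuous. Then the strong neighborhood system satisfies: (1) if V is a strong neighborhood of p ∈ S and q ∈ V, then there is a strong neighborhood W of q such that W ⊆ V; and (2) if p ≠ q, then there exist a strong neighborhood V of p and a strong neighborhood W of q such that V ∩ W = ∅. Consequently the strong neighborhood system determines a Hausdorff topology on S. -/

import Mathlib

open Set Filter Topology

/-- A distance distribution function: nondecreasing, left-continuous,
with values in `[0,1]`, and vanishing on `(-∞, 0]`. -/
def IsDDF (F : ℝ → ℝ) : Prop :=
  Monotone F ∧ (∀ x : ℝ, ContinuousWithinAt F (Set.Iio x) x) ∧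
    (∀ x, 0 ≤ F x ∧ F x ≤ 1) ∧ ∀ x ≤ 0, F x = 0

/-- The condition `(F, G; h)` in the definition of the modified Lévy distance. -/
def LevyCond (F G : ℝ → ℝ) (h : ℝ) : Prop :=
  ∀ x ∈ Set.Ioo (-(1 / h)) (1 / h), F (x - h) - h ≤ G x ∧ G x ≤ F (x + h) + h

/-- The modified Lévy distance on `Δ⁺`. -/
noncomputable def dL (F G : ℝ → ℝ) : ℝ :=
  sInf {h : ℝ | h ∈ Set.Ioc (0 : ℝ) 1 ∧ LevyCond F G h ∧ LevyCond G F h}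

/-- The distribution function `H₀`, equal to `0` on `(-∞, 0]` and `1` on `(0, ∞)`. -/
noncomputable def H0 : ℝ → ℝ := fun x => if x ≤ 0 then 0 else 1

/-- A triangle function: a binary operation on `Δ⁺` that is commutative, associative,
nondecreasing in each argument, and has `H₀` as identity. -/
def IsTriangleFunction (τ : (ℝ → ℝ) → (ℝ → ℝ) → (ℝ → ℝ)) : Prop :=
  (∀ F G, IsDDF F → IsDDF G → IsDDF (τ F G)) ∧
  (∀ F G, IsDDF F → IsDDF G → τ F G = τ G F) ∧
  (∀ F G K, IsDDF F → IsDDF G → IsDDF K → τ (τ F G) K = τ F (τ G K)) ∧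
  (∀ F G K, IsDDF F → IsDDF G → IsDDF K → F ≤ G → τ F K ≤ τ G K) ∧
  (∀ F, IsDDF F → τ H0 F = F)

/-- Continuity of a triangle function with respect to the modified Lévy metric on `Δ⁺`
(sequential continuity, which is equivalent since `d_L` is a metric). -/
def ContinuousTF (τ : (ℝ → ℝ) → (ℝ → ℝ) → (ℝ → ℝ)) : Prop :=
  ∀ (F G : ℕ → ℝ → ℝ) (F₀ G₀ : ℝ → ℝ),
    (∀ n, IsDDF (F n)) → (∀ n, IsDDF (G n)) → IsDDF F₀ → IsDDF G₀ →
    Filter.Tendsto (fun n => dL (F n) F₀) Filter.atTop (nhds 0) →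
    Filter.Tendsto (fun n => dL (G n) G₀) Filter.atTop (nhds 0) →
    Filter.Tendsto (fun n => dL (τ (F n) (G n)) (τ F₀ G₀)) Filter.atTop (nhds 0)

/-- `(S, 𝓕, τ)` is a probabilistic metric space. -/
structure IsPMSpace {S : Type*} (𝓕 : S → S → ℝ → ℝ)
    (τ : (ℝ → ℝ) → (ℝ → ℝ) → (ℝ → ℝ)) : Prop where
  ddf : ∀ p q, IsDDF (𝓕 p q)
  tf : IsTriangleFunction τ
  refl : ∀ p, 𝓕 p p = H0
  ne : ∀ p q, p ≠ q → 𝓕 p q ≠ H0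
  symm : ∀ p q, 𝓕 p q = 𝓕 q p
  tri : ∀ p q r, τ (𝓕 p q) (𝓕 q r) ≤ 𝓕 p r

/-- The strong neighborhood `N_p(t) = {q : F_{p,q}(t) > 1 - t}`. -/
def Npt {S : Type*} (𝓕 : S → S → ℝ → ℝ) (p : S) (t : ℝ) : Set S :=
  {q | 1 - t < 𝓕 p q t}

/-- A set is open in the strong topology iff it contains a strong neighborhood
of each of its points. -/
def StrongOpen {S : Type*} (𝓕 : S → S → ℝ → ℝ) (U : Set S) : Prop :=
  ∀ p ∈ U, ∃ t > 0, Npt 𝓕 p t ⊆ U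

-- auxiliary lemmas

lemma H0_isDDF : IsDDF H0 := by
  refine ⟨?_, ?_, ?_, ?_⟩
  · intro a b hab
    simp only [H0]
    by_cases ha : a ≤ 0 <;> by_cases hb : b ≤ 0
    · simp [ha, hb]
    · simp [ha, hb]
    · exact absurd (hab.trans hb) ha
    · simp [ha, hb]
  · intro x
    rcases le_or_gt x 0 with hx | hx
    · have : ∀ᶠ y in 𝓝[Set.Iio x] x, H0 y = H0 x := by
        filter_upwards [eventually_mem_nhdsWithin] with y hy
        simp only [H0, if_pos (le_of_lt (lt_of_lt_of_le hy hx)), if_pos hx]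
      exact (continuousWithinAt_const).congr_of_eventuallyEq this rfl
    · have hmem : Set.Ioi (0:ℝ) ∈ 𝓝[Set.Iio x] x :=
        mem_nhdsWithin_of_mem_nhds (Ioi_mem_nhds hx)
      have : ∀ᶠ y in 𝓝[Set.Iio x] x, H0 y = H0 x := by
        filter_upwards [hmem] with y hy
        simp only [H0, if_neg (not_le.mpr (show (0:ℝ) < y from hy)), if_neg (not_le.mpr hx)]
      exact (continuousWithinAt_const).congr_of_eventuallyEq this rfl
  · intro x; unfold H0; split_ifs <;> norm_num
  · intro x hx; simp [H0, hx]

lemma one_mem_levySet {F G : ℝ → ℝ} (hF : IsDDF F) (hG : IsDDF G) :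
    (1:ℝ) ∈ {h : ℝ | h ∈ Set.Ioc (0 : ℝ) 1 ∧ LevyCond F G h ∧ LevyCond G F h} := by
  refine ⟨⟨zero_lt_one, le_refl _⟩, ?_, ?_⟩ <;>
  · intro x _
    constructor
    · have := (hF.2.2.1 (x-1)).2
      have := (hG.2.2.1 x).1
      have := (hG.2.2.1 (x-1)).2
      have := (hF.2.2.1 x).1
      linarith
    · have := (hG.2.2.1 x).2
      have := (hF.2.2.1 (x+1)).1
      have := (hF.2.2.1 x).2
      have := (hG.2.2.1 (x+1)).1
      linarith

lemma levySet_bddBelow (F G : ℝ → ℝ) :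
    BddBelow {h : ℝ | h ∈ Set.Ioc (0 : ℝ) 1 ∧ LevyCond F G h ∧ LevyCond G F h} :=
  ⟨0, fun h hh => le_of_lt hh.1.1⟩

lemma dL_nonneg (F G : ℝ → ℝ) : 0 ≤ dL F G :=
  Real.sInf_nonneg (fun h hh => le_of_lt hh.1.1)

lemma dL_comm (F G : ℝ → ℝ) : dL F G = dL G F := by
  unfold dL
  congr 1
  ext h
  exact ⟨fun a => ⟨a.1, a.2.2, a.2.1⟩, fun a => ⟨a.1, a.2.2, a.2.1⟩⟩

lemma dL_self {F : ℝ → ℝ} (hF : Monotone F) : dL F F = 0 := by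
  unfold dL
  have : {h : ℝ | h ∈ Set.Ioc (0 : ℝ) 1 ∧ LevyCond F F h ∧ LevyCond F F h} = Set.Ioc 0 1 := by
    ext h
    simp only [Set.mem_setOf_eq, and_self_iff]
    constructor
    · exact fun ⟨h1, _⟩ => h1
    · intro hh
      have hc : LevyCond F F h := by
        intro x _
        have h1 : F (x - h) ≤ F x := hF (by linarith [hh.1])
        have h2 : F x ≤ F (x + h) := hF (by linarith [hh.1])
        exact ⟨by linarith [hh.1], by linarith [hh.1]⟩
      exact ⟨hh, hc⟩
  rw [this, csInf_Ioc zero_lt_one]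

/-- If `1 - h ≤ F h` then `dL F H0 ≤ h`. -/
lemma dL_H0_le {F : ℝ → ℝ} (hF : IsDDF F) {h : ℝ} (h0 : 0 < h) (h1 : h ≤ 1)
    (hFh : 1 - h ≤ F h) : dL F H0 ≤ h := by
  apply csInf_le (levySet_bddBelow _ _)
  refine ⟨⟨h0, h1⟩, ?_, ?_⟩
  · intro x _
    constructor
    · rcases le_or_gt x 0 with hx | hx
      · have : F (x - h) = 0 := hF.2.2.2 _ (by linarith)
        have : H0 x = 0 := by simp [H0, hx]
        simp_all; linarith
      · have : H0 x = 1 := by simp [H0, not_le.mpr hx]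
        have := (hF.2.2.1 (x-h)).2
        linarith
    · rcases le_or_gt x 0 with hx | hx
      · have : H0 x = 0 := by simp [H0, hx]
        have := (hF.2.2.1 (x+h)).1
        linarith
      · have : H0 x = 1 := by simp [H0, not_le.mpr hx]
        have : F h ≤ F (x + h) := hF.1 (by linarith)
        linarith [hFh]
  · intro x _
    constructor
    · rcases le_or_gt (x - h) 0 with hx | hx
      · have : H0 (x - h) = 0 := by simp [H0, hx]
        have := (hF.2.2.1 x).1
        linarith
      · have : H0 (x - h) = 1 := by simp [H0, not_le.mpr hx]
        have : F h ≤ F x := hF.1 (by linarith)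
        linarith [hFh]
    · rcases le_or_gt (x + h) 0 with hx | hx
      · have : F x = 0 := hF.2.2.2 _ (by linarith)
        have : H0 (x + h) = 0 := by simp [H0, hx]
        simp_all; linarith
      · have : H0 (x + h) = 1 := by simp [H0, not_le.mpr hx]
        have := (hF.2.2.1 x).2
        linarith

/-- Lower pointwise bound from `dL F G < h`. -/
lemma lower_bound_of_dL_lt {F G : ℝ → ℝ} (hF : IsDDF F) (hG : IsDDF G)
    {x h : ℝ} (hx : 0 < x) (h0 : 0 < h) (hxh : h * x < 1)
    (hlt : dL F G < h) : F (x - h) - h ≤ G x := by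
  obtain ⟨h', hh'S, hh'⟩ := exists_lt_of_csInf_lt ⟨1, one_mem_levySet hF hG⟩ hlt
  obtain ⟨⟨h'0, _⟩, hFG, _⟩ := hh'S
  have hdom : x ∈ Set.Ioo (-(1 / h')) (1 / h') := by
    constructor
    · have : 0 < 1 / h' := by positivity
      linarith
    · rw [lt_div_iff₀ h'0]
      nlinarith
  have := (hFG x hdom).1
  have hmono : F (x - h) ≤ F (x - h') := hF.1 (by linarith)
  linarith

lemma uniform_cont {τ : (ℝ → ℝ) → (ℝ → ℝ) → (ℝ → ℝ)} (hτ : ContinuousTF τ)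
    {F₀ G₀ : ℝ → ℝ} (hF₀ : IsDDF F₀) (hG₀ : IsDDF G₀) {δ : ℝ} (hδ : 0 < δ) :
    ∃ η > (0:ℝ), ∀ G G', IsDDF G → IsDDF G' → dL G F₀ ≤ η → dL G' G₀ ≤ η →
      dL (τ G G') (τ F₀ G₀) < δ := by
  by_contra hcon
  push_neg at hcon
  have hc : ∀ n : ℕ, ∃ G G', IsDDF G ∧ IsDDF G' ∧ dL G F₀ ≤ 1/(n+1) ∧ dL G' G₀ ≤ 1/(n+1) ∧
      δ ≤ dL (τ G G') (τ F₀ G₀) := by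
    intro n
    obtain ⟨G, G', hG, hG', h1, h2, h3⟩ := hcon (1/(n+1)) (by positivity)
    exact ⟨G, G', hG, hG', h1, h2, h3⟩
  choose G G' hG hG' h1 h2 h3 using hc
  have hten : Filter.Tendsto (fun n : ℕ => (1:ℝ)/(n+1)) Filter.atTop (nhds 0) :=
    tendsto_one_div_add_atTop_nhds_zero_nat
  have t1 : Filter.Tendsto (fun n => dL (G n) F₀) Filter.atTop (nhds 0) :=
    squeeze_zero (fun n => dL_nonneg _ _) h1 hten
  have t2 : Filter.Tendsto (fun n => dL (G' n) G₀) Filter.atTop (nhds 0) :=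
    squeeze_zero (fun n => dL_nonneg _ _) h2 hten
  have t3 := hτ G G' F₀ G₀ hG hG' hF₀ hG₀ t1 t2
  have := (t3.eventually (eventually_lt_nhds hδ)).exists
  obtain ⟨n, hn⟩ := this
  exact absurd (h3 n) (not_le.mpr hn)

/-- Extraction from left-continuity. -/
lemma exists_delta {F : ℝ → ℝ} (hF : IsDDF F) {t : ℝ} (ht : 0 < t) (hFt : 1 - t < F t) :
    ∃ δ > (0:ℝ), δ * t < 1 ∧ 1 - t < F (t - δ) - δ := by
  set c := F t - (1 - t) with hc
  have hc0 : 0 < c := by linarith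
  have hlc : Filter.Tendsto F (𝓝[Set.Iio t] t) (𝓝 (F t)) := hF.2.1 t
  have h1 : ∀ᶠ y in 𝓝[Set.Iio t] t, F t - c/2 < F y :=
    hlc.eventually (eventually_gt_nhds (by linarith))
  obtain ⟨y, hy1, hy2⟩ := (h1.and eventually_mem_nhdsWithin).exists
  have hyt : y < t := hy2
  refine ⟨min (t - y) (min (c/2) (1/(2*t))), ?_, ?_, ?_⟩
  · have : 0 < 1/(2*t) := by positivity
    simp only [lt_min_iff]
    exact ⟨by linarith, by linarith [hc0], this⟩
  · have h3 : min (t - y) (min (c/2) (1/(2*t))) ≤ 1/(2*t) := le_trans (min_le_right _ _) (min_le_right _ _)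
    have ht' : t ≠ 0 := ne_of_gt ht
    calc min (t - y) (min (c/2) (1/(2*t))) * t ≤ 1/(2*t) * t := by nlinarith
    _ = 1/2 := by field_simp
    _ < 1 := by norm_num
  · have h4 : min (t - y) (min (c/2) (1/(2*t))) ≤ t - y := min_le_left _ _
    have h5 : min (t - y) (min (c/2) (1/(2*t))) ≤ c/2 := le_trans (min_le_right _ _) (min_le_left _ _)
    have h6 : F y ≤ F (t - min (t - y) (min (c/2) (1/(2*t)))) := hF.1 (by linarith)
    have : F t - c/2 < F y := hy1
    have : F t - c = 1 - t := by rw [hc]; ring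
    linarith


lemma strong_part1 {S : Type*} (𝓕 : S → S → ℝ → ℝ) (τ : (ℝ → ℝ) → (ℝ → ℝ) → (ℝ → ℝ))
    (hPM : IsPMSpace 𝓕 τ) (hτ : ContinuousTF τ) :
    ∀ (p : S), ∀ t > (0 : ℝ), ∀ q ∈ Npt 𝓕 p t, ∃ s > (0 : ℝ), Npt 𝓕 q s ⊆ Npt 𝓕 p t := by
  intro p t ht q hq
  have hF : IsDDF (𝓕 p q) := hPM.ddf p q
  have hFt : 1 - t < 𝓕 p q t := hq
  obtain ⟨δ, hδ0, hδt, hδF⟩ := exists_delta hF ht hFt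
  obtain ⟨η, hη0, hη⟩ := uniform_cont hτ hF H0_isDDF hδ0
  refine ⟨min η 1, lt_min hη0 zero_lt_one, ?_⟩
  intro r hr
  have hrm : 1 - min η 1 < 𝓕 q r (min η 1) := hr
  have hddfqr : IsDDF (𝓕 q r) := hPM.ddf q r
  have hdLqr : dL (𝓕 q r) H0 ≤ min η 1 :=
    dL_H0_le hddfqr (lt_min hη0 zero_lt_one) (min_le_right _ _) (le_of_lt hrm)
  have hK : dL (τ (𝓕 p q) (𝓕 q r)) (τ (𝓕 p q) H0) < δ :=
    hη (𝓕 p q) (𝓕 q r) hF hddfqr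
      (by rw [dL_self hF.1]; exact le_of_lt hη0) (hdLqr.trans (min_le_left _ _))
  have hid : τ (𝓕 p q) H0 = 𝓕 p q := by
    rw [hPM.tf.2.1 (𝓕 p q) H0 hF H0_isDDF, hPM.tf.2.2.2.2 (𝓕 p q) hF]
  rw [hid] at hK
  have hKddf : IsDDF (τ (𝓕 p q) (𝓕 q r)) := hPM.tf.1 _ _ hF hddfqr
  have hlow : 𝓕 p q (t - δ) - δ ≤ τ (𝓕 p q) (𝓕 q r) t :=
    lower_bound_of_dL_lt hF hKddf ht hδ0 hδt (by rw [dL_comm]; exact hK)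
  have htri := hPM.tri p q r t
  show 1 - t < 𝓕 p r t
  calc 1 - t < 𝓕 p q (t - δ) - δ := hδF
  _ ≤ τ (𝓕 p q) (𝓕 q r) t := hlow
  _ ≤ 𝓕 p r t := htri

lemma strong_part2 {S : Type*} (𝓕 : S → S → ℝ → ℝ) (τ : (ℝ → ℝ) → (ℝ → ℝ) → (ℝ → ℝ))
    (hPM : IsPMSpace 𝓕 τ) (hτ : ContinuousTF τ) :
    ∀ p q : S, p ≠ q → ∃ t > (0 : ℝ), ∃ s > (0 : ℝ), Npt 𝓕 p t ∩ Npt 𝓕 q s = ∅ := by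
  intro p q hpq
  have hF : IsDDF (𝓕 p q) := hPM.ddf p q
  have hne := hPM.ne p q hpq
  have hex : ∃ x, 𝓕 p q x ≠ H0 x := by
    by_contra h; push_neg at h; exact hne (funext h)
  obtain ⟨x, hx⟩ := hex
  have hx0 : 0 < x := by
    by_contra h
    push_neg at h
    rw [hF.2.2.2 x h] at hx
    simp [H0, h] at hx
  have hH0x : H0 x = 1 := by simp [H0, not_le.mpr hx0]
  have hc : 𝓕 p q x < 1 := lt_of_le_of_ne (hF.2.2.1 x).2 (by rw [hH0x] at hx; exact hx)
  set c := 𝓕 p q x with hcdef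
  set δ := min (min x (1 - c)) (1/x) / 2 with hδdef
  have hm0 : 0 < min (min x (1 - c)) (1/x) := lt_min (lt_min hx0 (by linarith)) (by positivity)
  have hδ0 : 0 < δ := div_pos hm0 two_pos
  have hδx : δ * x < 1 := by
    have h1 : δ ≤ (1/x)/2 := by
      rw [hδdef]
      gcongr
      exact min_le_right _ _
    have h2 : (1/x)/2 * x = 1/2 := by field_simp
    nlinarith
  have hδc : δ < 1 - c := by
    have h1 : δ ≤ (1 - c)/2 := by
      rw [hδdef]
      gcongr
      exact le_trans (min_le_left _ _) (min_le_right _ _)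
    linarith
  have hδltx : δ < x := by
    have h1 : δ ≤ x/2 := by
      rw [hδdef]
      gcongr
      exact le_trans (min_le_left _ _) (min_le_left _ _)
    linarith
  obtain ⟨η, hη0, hη⟩ := uniform_cont hτ H0_isDDF H0_isDDF hδ0
  have hm : (0:ℝ) < min η 1 := lt_min hη0 zero_lt_one
  refine ⟨min η 1, hm, min η 1, hm, ?_⟩
  rw [Set.eq_empty_iff_forall_notMem]
  rintro r ⟨hr1, hr2⟩
  have h1 : 1 - min η 1 < 𝓕 p r (min η 1) := hr1
  have h2 : 1 - min η 1 < 𝓕 q r (min η 1) := hr2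
  have d1 : dL (𝓕 p r) H0 ≤ η :=
    le_trans (dL_H0_le (hPM.ddf p r) hm (min_le_right _ _) (le_of_lt h1)) (min_le_left _ _)
  have d2 : dL (𝓕 q r) H0 ≤ η :=
    le_trans (dL_H0_le (hPM.ddf q r) hm (min_le_right _ _) (le_of_lt h2)) (min_le_left _ _)
  have hK : dL (τ (𝓕 p r) (𝓕 q r)) (τ H0 H0) < δ :=
    hη (𝓕 p r) (𝓕 q r) (hPM.ddf p r) (hPM.ddf q r) d1 d2
  have hid : τ H0 H0 = H0 := hPM.tf.2.2.2.2 H0 H0_isDDF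
  rw [hid] at hK
  have hKddf : IsDDF (τ (𝓕 p r) (𝓕 q r)) := hPM.tf.1 _ _ (hPM.ddf p r) (hPM.ddf q r)
  have hlow : H0 (x - δ) - δ ≤ τ (𝓕 p r) (𝓕 q r) x :=
    lower_bound_of_dL_lt H0_isDDF hKddf hx0 hδ0 hδx (by rw [dL_comm]; exact hK)
  have hH0xd : H0 (x - δ) = 1 := by simp [H0, not_le.mpr (by linarith : (0:ℝ) < x - δ)]
  have htri := hPM.tri p r q x
  rw [hPM.symm r q] at htri
  rw [hH0xd] at hlow
  linarith


/-- In a PM space with continuous triangle function, the strong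
neighborhood system satisfies: (1) every strong neighborhood of `p` contains, around any
of its points `q`, a strong neighborhood of `q`; (2) distinct points have disjoint strong
neighborhoods; consequently the strong topology is Hausdorff. -/
theorem strong_nbhd_system_hausdorff {S : Type*} [Nonempty S]
    (𝓕 : S → S → ℝ → ℝ) (τ : (ℝ → ℝ) → (ℝ → ℝ) → (ℝ → ℝ))
    (hPM : IsPMSpace 𝓕 τ) (hτ : ContinuousTF τ) :
    (∀ (p : S), ∀ t > (0 : ℝ), ∀ q ∈ Npt 𝓕 p t, ∃ s > (0 : ℝ), Npt 𝓕 q s ⊆ Npt 𝓕 p t) ∧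
    (∀ p q : S, p ≠ q → ∃ t > (0 : ℝ), ∃ s > (0 : ℝ), Npt 𝓕 p t ∩ Npt 𝓕 q s = ∅) ∧
    (∀ p q : S, p ≠ q → ∃ U V : Set S, StrongOpen 𝓕 U ∧ StrongOpen 𝓕 V ∧
      p ∈ U ∧ q ∈ V ∧ U ∩ V = ∅) := by
  refine ⟨strong_part1 𝓕 τ hPM hτ, strong_part2 𝓕 τ hPM hτ, ?_⟩
  intro p q hpq
  obtain ⟨t, ht, s, hs, hdisj⟩ := strong_part2 𝓕 τ hPM hτ p q hpq
  have hmem : ∀ (r : S) (u : ℝ), 0 < u → r ∈ Npt 𝓕 r u := by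
    intro r u hu
    show 1 - u < 𝓕 r r u
    rw [hPM.refl r]
    simp [H0, not_le.mpr hu]
    linarith
  exact ⟨Npt 𝓕 p t, Npt 𝓕 q s,
    fun r hr => strong_part1 𝓕 τ hPM hτ p t ht r hr,
    fun r hr => strong_part1 𝓕 τ hPM hτ q s hs r hr,
    hmem p t ht, hmem q s hs, hdisj⟩
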